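/- If q = t^2 and X is the non-degenerate Hermitian variety in P^n(F_q), then the number of F_q-rational points of X equals (t^(n+1) - (-1)^(n+1)) * (t^n - (-1)^n) / (t^2 - 1). -/

import Mathlib

open Finset

/-- fiber a subtype of a product over the first coordinate -/
def prodSubtypeSigmaFst {α β : Type*} (Q : α → β → Prop) :
    {p : α × β // Q p.1 p.2} ≃ Σ a : α, {b : β // Q a b} where
  toFun p := ⟨p.1.1, p.1.2, p.2⟩
  invFun q := ⟨(q.1, q.2.1), q.2.2⟩
  left_inv := fun ⟨⟨a, b⟩, h⟩ => rfl
  right_inv := fun ⟨a, b, h⟩ => rfl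

/-- fiber a subtype of a product over the second coordinate -/
def prodSubtypeSigmaSnd {α β : Type*} (Q : α → β → Prop) :
    {p : α × β // Q p.1 p.2} ≃ Σ b : β, {a : α // Q a b} where
  toFun p := ⟨p.1.2, p.1.1, p.2⟩
  invFun q := ⟨(q.2.1, q.1), q.2.2⟩
  left_inv := fun ⟨⟨a, b⟩, h⟩ => rfl
  right_inv := fun ⟨a, b, h⟩ => rfl

section aux
variable {K : Type} [Field K] [Fintype K] {t : ℕ}

/-- In a finite field of cardinality `t^2` with `t` a prime power, `x ↦ x^t` is a ring hom. -/
lemma exists_frob (hp : IsPrimePow t) (hF : Fintype.card K = t ^ 2) :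
    ∃ φ : K →+* K, ∀ y : K, φ y = y ^ t := by
  obtain ⟨p, k, hpp, hk, rfl⟩ := hp
  haveI : Fact p.Prime := ⟨hpp.nat_prime⟩
  set r := ringChar K with hr
  haveI : CharP K r := ringChar.charP K
  obtain ⟨n, hrp, hcard⟩ := FiniteField.card K r
  have hrp' : r = p := by
    have h1 : r ∣ p ^ (k * 2) := by
      have : r ∣ r ^ (n : ℕ) := dvd_pow_self _ (by positivity)
      rw [← hcard, hF] at this
      rwa [← pow_mul] at this
    exact ((Nat.prime_dvd_prime_iff_eq hrp hpp.nat_prime).mp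
      (hrp.dvd_of_dvd_pow h1))
  haveI : CharP K p := hrp' ▸ ringChar.charP K
  exact ⟨iterateFrobenius K p k, fun y => iterateFrobenius_def ..⟩

lemma sum_norm_fixed (hp : IsPrimePow t) (hF : Fintype.card K = t ^ 2)
    {m : ℕ} (x : Fin m → K) :
    (∑ i, x i ^ (t + 1)) ^ t = ∑ i, x i ^ (t + 1) := by
  obtain ⟨φ, hφ⟩ := exists_frob hp hF
  have hsingle : ∀ y : K, (y ^ (t + 1)) ^ t = y ^ (t + 1) := by
    intro y
    have hy : y ^ t ^ 2 = y := by rw [← hF]; exact FiniteField.pow_card y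
    calc (y ^ (t + 1)) ^ t = y ^ (t ^ 2 + t) := by rw [← pow_mul]; ring_nf
      _ = y ^ t ^ 2 * y ^ t := by rw [pow_add]
      _ = y * y ^ t := by rw [hy]
      _ = y ^ (t + 1) := by rw [pow_succ, mul_comm]
  rw [← hφ, map_sum]
  simp only [hφ, hsingle]
lemma card_pow_fiber (ht : 2 ≤ t) (hF : Fintype.card K = t ^ 2)
    {c : K} (hc : c ≠ 0) (hct : c ^ t = c) :
    Nat.card {y : K // y ^ (t + 1) = c} = t + 1 := by
  classical
  have hcardu : Fintype.card Kˣ = t ^ 2 - 1 := by rw [Fintype.card_units, hF]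
  have htsq : t ^ 2 - 1 = (t + 1) * (t - 1) := by
    obtain ⟨s, rfl⟩ : ∃ s, t = s + 2 := ⟨t - 2, by omega⟩
    have e1 : (s + 2) ^ 2 = s * s + 4 * s + 4 := by ring
    have e2 : (s + 2 + 1) * (s + 2 - 1) = s * s + 4 * s + 3 := by
      have h : s + 2 - 1 = s + 1 := rfl
      rw [h]; ring
    omega
  obtain ⟨g, hg⟩ := IsCyclic.exists_generator (α := Kˣ)
  have hog : orderOf g = (t + 1) * (t - 1) := by
    rw [orderOf_eq_card_of_forall_mem_zpowers hg, Nat.card_eq_fintype_card, hcardu, htsq]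
  set u : Kˣ := Units.mk0 c hc with hu
  have hu1 : u ^ (t - 1) = 1 := by
    have h1 : c ^ (t - 1) * c = 1 * c := by
      rw [one_mul, ← pow_succ]
      have h : t - 1 + 1 = t := by omega
      rw [h, hct]
    have h2 : c ^ (t - 1) = 1 := mul_right_cancel₀ hc h1
    ext
    push_cast [hu]
    exact h2
  obtain ⟨j, hj⟩ := hg u
  have hj' : g ^ j = u := hj
  have hdvd : ((t : ℤ) + 1) ∣ j := by
    have h3 : g ^ (j * ((t - 1 : ℕ) : ℤ)) = 1 := by
      rw [zpow_mul, hj', zpow_natCast, hu1]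
    rw [← orderOf_dvd_iff_zpow_eq_one, hog] at h3
    have hc1 : (((t - 1 : ℕ)) : ℤ) = (t : ℤ) - 1 := by
      push_cast [Nat.cast_sub (by omega : 1 ≤ t)]; ring
    have hc2 : (((t + 1) * (t - 1) : ℕ) : ℤ) = ((t : ℤ) + 1) * ((t : ℤ) - 1) := by
      push_cast [Nat.cast_sub (by omega : 1 ≤ t)]; ring
    rw [hc2, hc1] at h3
    have ht1 : ((t : ℤ) - 1) ≠ 0 := by
      have : (2 : ℤ) ≤ t := by exact_mod_cast ht
      omega
    exact (mul_dvd_mul_iff_right ht1).mp h3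
  obtain ⟨i, hi⟩ := hdvd
  have hroot : (g ^ i) ^ (t + 1) = u := by
    have h : (g ^ i) ^ (t + 1) = g ^ (i * ((t + 1 : ℕ) : ℤ)) := by
      rw [← zpow_natCast (g ^ i) (t + 1), ← zpow_mul]
    rw [h, ← hj', hi]
    congr 1
    push_cast
    ring
  set α : Kˣ := g ^ i with hα
  have hαc : (α : K) ^ (t + 1) = c := by
    have h := congrArg (Units.val) hroot
    push_cast at h
    simpa [hu] using h
  have key : Nat.card {y : K // y ^ (t + 1) = c} = Nat.card {z : Kˣ // z ^ (t + 1) = 1} := by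
    apply Nat.card_congr
    refine Equiv.symm (Equiv.ofBijective (fun z => ⟨((α * z.1 : Kˣ) : K), ?_⟩) ⟨?_, ?_⟩)
    · push_cast
      rw [mul_pow]
      have h6 : (z.1 : K) ^ (t + 1) = 1 := by
        have h := congrArg (Units.val) z.2
        push_cast at h
        simpa using h
      rw [hαc, h6, mul_one]
    · rintro ⟨z, hz⟩ ⟨z', hz'⟩ h
      simp only [Subtype.mk.injEq] at h ⊢
      exact mul_left_cancel (Units.ext h)
    · rintro ⟨y, hy⟩
      have hy0 : y ≠ 0 := by
        rintro rfl
        exact hc (by simpa using hy.symm)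
      refine ⟨⟨α⁻¹ * Units.mk0 y hy0, ?_⟩, ?_⟩
      · ext
        simp only [Units.val_mul, Units.val_pow_eq_pow_val, Units.val_one, mul_pow,
          Units.val_inv_eq_inv_val, Units.val_mk0, inv_pow]
        rw [hαc, hy]
        exact inv_mul_cancel₀ hc
      · simp
  rw [key]
  haveI : NeZero (t + 1) := ⟨by omega⟩
  set ζ : Kˣ := g ^ (t - 1) with hζ
  have hoζ : orderOf ζ = t + 1 := by
    rw [hζ, orderOf_pow, hog]
    have hgcd : Nat.gcd ((t + 1) * (t - 1)) (t - 1) = t - 1 :=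
      Nat.gcd_eq_right ⟨t + 1, by ring⟩
    rw [hgcd]
    have hpos : 0 < t - 1 := by omega
    exact Nat.mul_div_cancel _ hpos
  have hprim : IsPrimitiveRoot ζ (t + 1) := hoζ ▸ IsPrimitiveRoot.orderOf ζ
  have hcardroots := hprim.card_rootsOfUnity'
  have h7 : Nat.card {z : Kˣ // z ^ (t + 1) = 1} = Fintype.card (rootsOfUnity (t + 1) K) := by
    rw [← Nat.card_eq_fintype_card]
    exact Nat.card_congr (Equiv.subtypeEquivRight (fun z => (mem_rootsOfUnity _ z).symm))
  rw [h7, ← Nat.card_eq_fintype_card, hcardroots]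

lemma card_step (hp : IsPrimePow t) (hF : Fintype.card K = t ^ 2) (m : ℕ) :
    Nat.card {x : Fin (m + 1) → K // ∑ i, x i ^ (t + 1) = 0} =
      Nat.card {x : Fin m → K // ∑ i, x i ^ (t + 1) = 0} +
        (t + 1) * (t ^ (2 * m) -
          Nat.card {x : Fin m → K // ∑ i, x i ^ (t + 1) = 0}) := by
  classical
  have ht : 2 ≤ t := hp.two_le
  obtain ⟨φ, hφ⟩ := exists_frob hp hF
  set S : (Fin m → K) → K := fun x => ∑ i, x i ^ (t + 1) with hS
  -- Step 1 : fiber over the first coordinate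
  have E1 : {x : Fin (m + 1) → K // ∑ i, x i ^ (t + 1) = 0} ≃
      Σ y : K, {x : Fin m → K // S x = -y ^ (t + 1)} := by
    refine ⟨fun x => ⟨x.1 0, Fin.tail x.1, ?_⟩, fun q => ⟨Fin.cons q.1 q.2.1, ?_⟩, ?_, ?_⟩
    · have hx := x.2
      rw [Fin.sum_univ_succ] at hx
      simp only [hS, Fin.tail]
      linear_combination hx
    · have hx := q.2.2
      simp only [hS] at hx
      rw [Fin.sum_univ_succ]
      simp only [Fin.cons_zero, Fin.cons_succ]
      linear_combination hx
    · rintro ⟨x, hx⟩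
      simp [Fin.cons_self_tail]
    · rintro ⟨y, x, hx⟩
      simp [Fin.tail_cons]
      rfl
  have h1 : Nat.card {x : Fin (m + 1) → K // ∑ i, x i ^ (t + 1) = 0} =
      ∑ y : K, Nat.card {x : Fin m → K // S x = -y ^ (t + 1)} := by
    rw [Nat.card_congr E1, Nat.card_eq_fintype_card, Fintype.card_sigma]
    simp [Nat.card_eq_fintype_card]
  -- Step 2 : split off y = 0
  have h2 : ∑ y : K, Nat.card {x : Fin m → K // S x = -y ^ (t + 1)} =
      Nat.card {x : Fin m → K // S x = -(0 : K) ^ (t + 1)} +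
        ∑ y ∈ univ.erase (0 : K), Nat.card {x : Fin m → K // S x = -y ^ (t + 1)} :=
    (Finset.add_sum_erase _ _ (mem_univ 0)).symm
  have h3 : Nat.card {x : Fin m → K // S x = -(0 : K) ^ (t + 1)} =
      Nat.card {x : Fin m → K // ∑ i, x i ^ (t + 1) = 0} := by
    apply Nat.card_congr
    apply Equiv.subtypeEquivRight
    intro x
    simp only [hS, zero_pow (Nat.succ_ne_zero t), neg_zero]
  -- Step 3 : refiber the rest
  have h4 : ∑ y ∈ univ.erase (0 : K), Nat.card {x : Fin m → K // S x = -y ^ (t + 1)} =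
      Nat.card {p : {y : K // y ≠ 0} × (Fin m → K) // S p.2 = -(p.1.1) ^ (t + 1)} := by
    rw [Nat.card_congr (prodSubtypeSigmaFst (fun (y : {y : K // y ≠ 0}) (x : Fin m → K) =>
      S x = -(y.1) ^ (t + 1))), Nat.card_eq_fintype_card, Fintype.card_sigma]
    rw [Finset.sum_subtype (p := fun y : K => y ≠ 0) (F := inferInstance) (univ.erase (0 : K))
      (fun y => by simp) (fun y => Nat.card {x : Fin m → K // S x = -y ^ (t + 1)})]
    simp [Nat.card_eq_fintype_card]
  -- Step 4 : refiber over x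
  have h5 : Nat.card {p : {y : K // y ≠ 0} × (Fin m → K) // S p.2 = -(p.1.1) ^ (t + 1)} =
      ∑ x : Fin m → K, Nat.card {y : {y : K // y ≠ 0} // S x = -(y.1) ^ (t + 1)} := by
    rw [Nat.card_congr (prodSubtypeSigmaSnd (fun (y : {y : K // y ≠ 0}) (x : Fin m → K) =>
      S x = -(y.1) ^ (t + 1))), Nat.card_eq_fintype_card, Fintype.card_sigma]
    simp [Nat.card_eq_fintype_card]
  -- Step 5 : compute each fiber
  have h6 : ∀ x : Fin m → K, Nat.card {y : {y : K // y ≠ 0} // S x = -(y.1) ^ (t + 1)} =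
      if S x = 0 then 0 else t + 1 := by
    intro x
    by_cases hx : S x = 0
    · rw [if_pos hx, Nat.card_eq_zero]
      left
      refine ⟨fun y => ?_⟩
      have h := y.2
      have hzero : (y.1.1 : K) ^ (t + 1) = 0 := by linear_combination h - hx
      exact y.1.2 (pow_eq_zero_iff (Nat.succ_ne_zero t) |>.mp hzero)
    · rw [if_neg hx]
      have hc : (-(S x) : K) ≠ 0 := neg_ne_zero.mpr hx
      have hct : (-(S x)) ^ t = -(S x) := by
        rw [← hφ, map_neg, hφ, sum_norm_fixed hp hF x]
      have e : Nat.card {y : {y : K // y ≠ 0} // S x = -(y.1) ^ (t + 1)} =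
          Nat.card {y : K // y ^ (t + 1) = -(S x)} := by
        apply Nat.card_congr
        refine ⟨fun y => ⟨y.1.1, by linear_combination y.2⟩,
          fun y => ⟨⟨y.1, fun h0 => ?_⟩, by linear_combination y.2⟩, ?_, ?_⟩
        · apply hc
          rw [← y.2, h0]
          simp [zero_pow (Nat.succ_ne_zero t)]
        · rintro ⟨⟨y, hy0⟩, hy⟩
          rfl
        · rintro ⟨y, hy⟩
          rfl
      rw [e]
      exact card_pow_fiber (hp.two_le) hF hc hct
  -- Step 6 : sum the fibers
  have h7 : ∑ x : Fin m → K, Nat.card {y : {y : K // y ≠ 0} // S x = -(y.1) ^ (t + 1)} =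
      (t + 1) * (univ.filter (fun x : Fin m → K => ¬ S x = 0)).card := by
    simp only [h6]
    rw [Finset.sum_ite, Finset.sum_const_zero, Finset.sum_const, zero_add, smul_eq_mul]
    ring
  -- Step 7 : counting
  have h8 : (univ.filter (fun x : Fin m → K => S x = 0)).card =
      Nat.card {x : Fin m → K // ∑ i, x i ^ (t + 1) = 0} := by
    rw [Nat.card_eq_fintype_card, Fintype.card_subtype]
  have h9 : (univ.filter (fun x : Fin m → K => S x = 0)).card +
      (univ.filter (fun x : Fin m → K => ¬ S x = 0)).card = t ^ (2 * m) := by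
    rw [Finset.card_filter_add_card_filter_not]
    simp only [Finset.card_univ]
    rw [Fintype.card_fun, hF, Fintype.card_fin, ← pow_mul]
  rw [h1, h2, h3, h4, h5, h7]
  have h10 : (univ.filter (fun x : Fin m → K => ¬ S x = 0)).card =
      t ^ (2 * m) - (univ.filter (fun x : Fin m → K => S x = 0)).card :=
    Nat.eq_sub_of_add_eq' h9
  rw [h10, h8]

lemma card_le (hF : Fintype.card K = t ^ 2) (m : ℕ) :
    Nat.card {x : Fin m → K // ∑ i, x i ^ (t + 1) = 0} ≤ t ^ (2 * m) := by
  classical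
  rw [Nat.card_eq_fintype_card]
  calc Fintype.card {x : Fin m → K // ∑ i, x i ^ (t + 1) = 0}
      ≤ Fintype.card (Fin m → K) := Fintype.card_subtype_le _
    _ = t ^ (2 * m) := by rw [Fintype.card_fun, hF, Fintype.card_fin, ← pow_mul]

lemma card_step_int (hp : IsPrimePow t) (hF : Fintype.card K = t ^ 2) (m : ℕ) :
    (Nat.card {x : Fin (m + 1) → K // ∑ i, x i ^ (t + 1) = 0} : ℤ) =
      Nat.card {x : Fin m → K // ∑ i, x i ^ (t + 1) = 0} +
        ((t : ℤ) + 1) * ((t : ℤ) ^ (2 * m) -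
          Nat.card {x : Fin m → K // ∑ i, x i ^ (t + 1) = 0}) := by
  have h := card_step hp hF m
  have hle := card_le hF m
  rw [h]
  push_cast [Nat.cast_sub hle]
  ring

lemma card_zero_case : Nat.card {x : Fin 0 → K // ∑ i, x i ^ (t + 1) = 0} = 1 := by
  haveI : Unique {x : Fin 0 → K // ∑ i, x i ^ (t + 1) = 0} :=
    { default := ⟨fun i => i.elim0, by simp⟩
      uniq := fun a => Subtype.ext (funext fun i => i.elim0) }
  exact Nat.card_unique

lemma card_closed (hp : IsPrimePow t) (hF : Fintype.card K = t ^ 2) (m : ℕ) :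
    (Nat.card {x : Fin (m + 1) → K // ∑ i, x i ^ (t + 1) = 0} : ℤ) =
      1 + ((t : ℤ) ^ (m + 1) - (-1) ^ (m + 1)) * ((t : ℤ) ^ m - (-1) ^ m) := by
  induction m with
  | zero =>
    have h := card_step_int hp hF 0
    rw [card_zero_case] at h
    rw [h]
    push_cast
    ring
  | succ m ih =>
    have h := card_step_int hp hF (m + 1)
    rw [ih] at h
    rw [h]
    have he2 : ((-1 : ℤ)) ^ m * (-1) ^ m = 1 := by
      rw [← pow_add]
      exact Even.neg_one_pow ⟨m, by ring⟩
    have hexp : (t : ℤ) ^ (2 * (m + 1)) = ((t : ℤ) ^ m) ^ 2 * (t : ℤ) ^ 2 := by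
      rw [← pow_mul, ← pow_add]
      ring_nf
    rw [hexp]
    have h1 : ((t : ℤ)) ^ (m + 1) = (t : ℤ) ^ m * t := by ring
    have h2 : ((t : ℤ)) ^ (m + 1 + 1) = (t : ℤ) ^ m * t * t := by ring
    have h3 : ((-1 : ℤ)) ^ (m + 1) = (-1) ^ m * (-1) := by ring
    have h4 : ((-1 : ℤ)) ^ (m + 1 + 1) = (-1) ^ m := by
      rw [pow_succ, pow_succ]
      ring
    rw [h1, h2, h3, h4]
    linear_combination ((t : ℤ) + 1) * he2

lemma proj_count (hF : Fintype.card K = t ^ 2) (ht : 2 ≤ t) (n : ℕ) :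
    Nat.card {x : Fin (n + 1) → K // ∑ i, x i ^ (t + 1) = 0} =
      (t ^ 2 - 1) * Nat.card {x : Projectivization K (Fin (n + 1) → K) //
        ∑ i, x.rep i ^ (t + 1) = 0} + 1 := by
  classical
  have happ : ∀ (u : Kˣ) (v : Fin (n + 1) → K) (i : Fin (n + 1)),
      (u • v) i = (u : K) * v i := fun u v i => rfl
  have hmkc : ∀ (v w : Fin (n + 1) → K) (hv : v ≠ 0) (hw : w ≠ 0), v = w →
      Projectivization.mk K v hv = Projectivization.mk K w hw := by
    intro v w hv hw h
    subst h
    rfl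
  have hsum : ∀ (u : Kˣ) (v : Fin (n + 1) → K),
      ∑ i, (u • v) i ^ (t + 1) = (u : K) ^ (t + 1) * ∑ i, v i ^ (t + 1) := by
    intro u v
    rw [Finset.mul_sum]
    exact Finset.sum_congr rfl fun i _ => by rw [happ, mul_pow]
  have hinv : ∀ (u : Kˣ) (v : Fin (n + 1) → K),
      (∑ i, (u • v) i ^ (t + 1) = 0) ↔ (∑ i, v i ^ (t + 1) = 0) := by
    intro u v
    rw [hsum]
    constructor
    · intro h
      rcases mul_eq_zero.mp h with h' | h'
      · exact absurd h' (pow_ne_zero _ u.ne_zero)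
      · exact h'
    · intro h
      rw [h, mul_zero]
  have hsne : ∀ (u : Kˣ) (v : Fin (n + 1) → K), v ≠ 0 → u • v ≠ 0 := by
    intro u v hv h
    apply hv
    have := congrArg (fun w => u⁻¹ • w) h
    simpa [smul_smul] using this
  have E : {x : Projectivization K (Fin (n + 1) → K) // ∑ i, x.rep i ^ (t + 1) = 0} × Kˣ ≃
      {v : Fin (n + 1) → K // v ≠ 0 ∧ ∑ i, v i ^ (t + 1) = 0} := by
    refine Equiv.ofBijective
      (fun q => ⟨q.2 • q.1.1.rep, hsne q.2 _ q.1.1.rep_nonzero,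
        (hinv q.2 q.1.1.rep).mpr q.1.2⟩) ⟨?_, ?_⟩
    · rintro ⟨⟨x, hx⟩, u⟩ ⟨⟨x', hx'⟩, u'⟩ h
      simp only [Subtype.mk.injEq] at h
      obtain rfl : x = x' := by
        have h1 : Projectivization.mk K (u • x.rep)
            (hsne u _ x.rep_nonzero) = Projectivization.mk K x.rep x.rep_nonzero := by
          rw [Projectivization.mk_eq_mk_iff]
          exact ⟨u, rfl⟩
        have h2 : Projectivization.mk K (u' • x'.rep)
            (hsne u' _ x'.rep_nonzero) = Projectivization.mk K x'.rep x'.rep_nonzero := by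
          rw [Projectivization.mk_eq_mk_iff]
          exact ⟨u', rfl⟩
        have h3 := hmkc _ _ (hsne u _ x.rep_nonzero) (hsne u' _ x'.rep_nonzero) h
        rw [h1] at h3
        rw [h2] at h3
        rwa [Projectivization.mk_rep, Projectivization.mk_rep] at h3
      obtain rfl : u = u' := by
        apply Units.ext
        apply smul_left_injective K x.rep_nonzero
        show (u : K) • x.rep = (u' : K) • x.rep
        funext i
        have := congrFun h i
        rw [happ, happ] at this
        simpa using this
      have : hx = hx' := rfl
      subst this
      rfl
    · rintro ⟨v, hv0, hvP⟩
      set x := Projectivization.mk K v hv0 with hxdef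
      have hmk : Projectivization.mk K v hv0 =
          Projectivization.mk K x.rep x.rep_nonzero := by rw [Projectivization.mk_rep]
      obtain ⟨a, ha⟩ := (Projectivization.mk_eq_mk_iff K v x.rep hv0 x.rep_nonzero).mp hmk
      have hPrep : ∑ i, x.rep i ^ (t + 1) = 0 := by
        apply (hinv a x.rep).mp
        rw [show a • x.rep = v from ha]
        exact hvP
      exact ⟨⟨⟨x, hPrep⟩, a⟩, Subtype.ext ha⟩
  -- now count
  have hc1 : Nat.card {v : Fin (n + 1) → K // v ≠ 0 ∧ ∑ i, v i ^ (t + 1) = 0} =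
      Nat.card {x : Projectivization K (Fin (n + 1) → K) //
        ∑ i, x.rep i ^ (t + 1) = 0} * (t ^ 2 - 1) := by
    rw [← Nat.card_congr E, Nat.card_prod]
    congr 1
    rw [Nat.card_eq_fintype_card, Fintype.card_units, hF]
  -- split off zero
  have hzero : ∑ i, (0 : Fin (n + 1) → K) i ^ (t + 1) = 0 := by
    simp [zero_pow (Nat.succ_ne_zero t)]
  have hc2 : Nat.card {v : Fin (n + 1) → K // ∑ i, v i ^ (t + 1) = 0} =
      Nat.card {v : Fin (n + 1) → K // v ≠ 0 ∧ ∑ i, v i ^ (t + 1) = 0} + 1 := by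
    rw [Nat.card_eq_fintype_card, Nat.card_eq_fintype_card, Fintype.card_subtype,
      Fintype.card_subtype]
    have hset : (univ.filter (fun v : Fin (n + 1) → K => ∑ i, v i ^ (t + 1) = 0)) =
        insert (0 : Fin (n + 1) → K)
          (univ.filter (fun v : Fin (n + 1) → K => v ≠ 0 ∧ ∑ i, v i ^ (t + 1) = 0)) := by
      ext v
      simp only [mem_filter, mem_univ, true_and, mem_insert]
      constructor
      · intro hv
        by_cases h0 : v = 0
        · exact Or.inl h0
        · exact Or.inr ⟨h0, hv⟩
      · rintro (rfl | ⟨-, hv⟩)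
        · exact hzero
        · exact hv
    rw [hset, Finset.card_insert_of_notMem (by simp)]
  rw [hc2, hc1]
  ring
end aux

/-- Bose–Chakravarti: the number of rational points of the non-degenerate Hermitian
variety `x₀^(t+1) + ... + xₙ^(t+1) = 0` in `ℙⁿ(𝔽_{t²})` equals
`(t^(n+1) - (-1)^(n+1)) * (t^n - (-1)^n) / (t² - 1)` (stated in multiplied form). -/
theorem hermitian_variety_card (t n : ℕ) (hp : IsPrimePow t) (F : Type) [Field F] [Fintype F]
    (hF : Fintype.card F = t ^ 2) :
    ((t : ℤ) ^ 2 - 1) *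
        (Nat.card {x : Projectivization F (Fin (n + 1) → F) |
          ∑ i, (x.rep i) ^ (t + 1) = 0} : ℤ) =
      ((t : ℤ) ^ (n + 1) - (-1) ^ (n + 1)) * ((t : ℤ) ^ n - (-1) ^ n) := by
  have ht : 2 ≤ t := hp.two_le
  show ((t : ℤ) ^ 2 - 1) *
      (Nat.card {x : Projectivization F (Fin (n + 1) → F) //
        ∑ i, (x.rep i) ^ (t + 1) = 0} : ℤ) = _
  have hproj := proj_count hF ht n
  have hclosed := card_closed hp hF n
  have hle : 1 ≤ t ^ 2 := Nat.one_le_pow _ _ (Nat.lt_of_lt_of_le Nat.zero_lt_two ht)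
  have h1 : (Nat.card {x : Fin (n + 1) → F // ∑ i, x i ^ (t + 1) = 0} : ℤ) =
      ((t : ℤ) ^ 2 - 1) * (Nat.card {x : Projectivization F (Fin (n + 1) → F) //
        ∑ i, (x.rep i) ^ (t + 1) = 0} : ℤ) + 1 := by
    rw [hproj]
    push_cast [Nat.cast_sub hle]
    ring
  linear_combination hclosed - h1
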